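/- Let S be a nonempty subset of ℤ^n (viewed inside ℝ^n). Then the limit cone of S equals {0} if and only if S is a finite set. -/

import Mathlib

/-- The limit cone `S∞` of a subset `S` of a real normed vector space: all vectors
`v = lim εⱼ • μⱼ` for sequences `μⱼ ∈ S` and positive reals `εⱼ → 0`. -/
def limitCone {E : Type*} [NormedAddCommGroup E] [NormedSpace ℝ E] (S : Set E) : Set E :=
  {v | ∃ (μ : ℕ → E) (ε : ℕ → ℝ), (∀ j, μ j ∈ S) ∧ (∀ j, 0 < ε j) ∧
    Filter.Tendsto ε Filter.atTop (nhds 0) ∧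
    Filter.Tendsto (fun j => ε j • μ j) Filter.atTop (nhds v)}

lemma abs_coord_le_norm {n : ℕ} (x : EuclideanSpace ℝ (Fin n)) (i : Fin n) :
    |x i| ≤ ‖x‖ := by
  rw [EuclideanSpace.norm_eq]
  have h1 : |x i| = Real.sqrt (‖x i‖ ^ 2) := by
    rw [Real.sqrt_sq_eq_abs]; simp [abs_abs]
  rw [h1]
  apply Real.sqrt_le_sqrt
  exact Finset.single_le_sum (f := fun i => ‖x i‖ ^ 2)
    (fun j _ => by positivity) (Finset.mem_univ i)

/-- For a nonempty subset `S` of `ℤ^n` (viewed inside `ℝ^n`), the limit cone of `S`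
equals `{0}` if and only if `S` is finite. -/
theorem stmt7 (n : ℕ) (S : Set (EuclideanSpace ℝ (Fin n)))
    (hint : ∀ x ∈ S, ∀ i : Fin n, ∃ m : ℤ, x i = (m : ℝ))
    (hne : S.Nonempty) :
    limitCone S = {0} ↔ S.Finite := by
  constructor
  · -- limit cone = {0} → finite
    intro h
    by_contra hfin
    -- S is unbounded: otherwise integer points in a ball are finite
    have hub : ∀ R : ℝ, ∃ x ∈ S, R < ‖x‖ := by
      intro R
      by_contra hc
      push_neg at hc
      apply hfin
      set T : Set (Fin n → ℤ) := Set.pi Set.univ fun _ => Set.Icc (-⌈R⌉) ⌈R⌉ with hT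
      have hTfin : T.Finite := Set.Finite.pi fun _ => Set.finite_Icc _ _
      have hsub : S ⊆ (fun g : Fin n → ℤ =>
          (EuclideanSpace.equiv (Fin n) ℝ).symm (fun i => (g i : ℝ))) '' T := by
        intro x hx
        choose g hg using hint x hx
        refine ⟨g, ?_, ?_⟩
        · intro i _
          have h1 : |x i| ≤ R := le_trans (abs_coord_le_norm x i) (hc x hx)
          rw [hg i] at h1
          have h2 : |(g i : ℝ)| ≤ (⌈R⌉ : ℝ) := le_trans h1 (Int.le_ceil R)
          rw [← Int.cast_abs, Int.cast_le] at h2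
          exact Set.mem_Icc.2 ⟨neg_le_of_abs_le h2, le_of_abs_le h2⟩
        · ext i; simp [← hg i]
      exact (hTfin.image _).subset hsub
    -- pick μ j with ‖μ j‖ > j
    choose μ hμS hμ using fun j : ℕ => hub (j : ℝ)
    have hμpos : ∀ j, 0 < ‖μ j‖ := fun j => lt_of_le_of_lt (Nat.cast_nonneg j) (hμ j)
    set ε : ℕ → ℝ := fun j => ‖μ j‖⁻¹ with hε
    have hεpos : ∀ j, 0 < ε j := fun j => inv_pos.2 (hμpos j)
    have hnorm : Filter.Tendsto (fun j => ‖μ j‖) Filter.atTop Filter.atTop :=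
      Filter.tendsto_atTop_mono (fun j => (hμ j).le) tendsto_natCast_atTop_atTop
    have hε0 : Filter.Tendsto ε Filter.atTop (nhds 0) := hnorm.inv_tendsto_atTop
    -- unit vectors
    have hsph : ∀ j, ε j • μ j ∈ Metric.sphere (0 : EuclideanSpace ℝ (Fin n)) 1 := by
      intro j
      simp only [Metric.mem_sphere, dist_zero_right, norm_smul, Real.norm_eq_abs,
        abs_of_pos (hεpos j), hε]
      rw [abs_of_pos (inv_pos.2 (hμpos j))]
      exact inv_mul_cancel₀ (hμpos j).ne'
    obtain ⟨v, hv, φ, hφ, hlim⟩ :=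
      (isCompact_sphere (0 : EuclideanSpace ℝ (Fin n)) 1).tendsto_subseq hsph
    have hv0 : v = 0 := by
      have : v ∈ limitCone S := by
        refine ⟨μ ∘ φ, ε ∘ φ, fun j => hμS _, fun j => hεpos _,
          hε0.comp hφ.tendsto_atTop, hlim⟩
      rw [h] at this; exact this
    rw [hv0] at hv
    have : (0:ℝ) = 1 := by simpa using Metric.mem_sphere.1 hv
    norm_num at this
  · -- finite → limit cone = {0}
    intro hS
    obtain ⟨C, hC⟩ := (Bornology.IsBounded.exists_norm_le hS.isBounded)
    ext v
    constructor
    · rintro ⟨μ, ε, hμS, hεpos, hε0, hlim⟩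
      have h0 : Filter.Tendsto (fun j => ε j • μ j) Filter.atTop
          (nhds (0 : EuclideanSpace ℝ (Fin n))) := by
        apply squeeze_zero_norm (a := fun j => ε j * C)
        · intro j
          rw [norm_smul, Real.norm_eq_abs, abs_of_pos (hεpos j)]
          exact mul_le_mul_of_nonneg_left (hC _ (hμS j)) (hεpos j).le
        · simpa using hε0.mul_const C
      have := tendsto_nhds_unique hlim h0
      simp [this]
    · intro hv
      obtain ⟨s, hs⟩ := hne
      refine Set.mem_singleton_iff.1 hv ▸ ⟨fun _ => s, fun j => (j + 1 : ℝ)⁻¹,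
        fun _ => hs, fun j => by positivity, ?_, ?_⟩
      · have := tendsto_one_div_add_atTop_nhds_zero_nat (𝕜 := ℝ)
        simp only [one_div] at this
        exact_mod_cast this
      · have : Filter.Tendsto (fun j : ℕ => (j + 1 : ℝ)⁻¹) Filter.atTop (nhds 0) := by
          have := tendsto_one_div_add_atTop_nhds_zero_nat (𝕜 := ℝ)
          simp only [one_div] at this
          exact_mod_cast this
        simpa using this.smul_const s
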